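/- Let z = z_1⋯z_ℓ be a word over an alphabet A. For any word w over A, the q-Parikh matrix P_z(w) is upper unitriangular, and for all 1 ≤ i ≤ ℓ−r+1 and 1 ≤ r ≤ ℓ, its entry at position (i, i+r) equals q^{s(r−1)} · (w choose z_i z_{i+1}⋯z_{i+r−1})_q, where s(m) = m(m+1)/2. -/

import Mathlib

open Polynomial

/-- q-binomial on reversed words: first list = word with rightmost letter first,
matching the recursion (ua choose vb)_q = (u choose vb)_q * q^{|vb|} + [a=b](u choose v)_q. -/
noncomputable def qBaux {α : Type*} [DecidableEq α] : List α → List α → Polynomial ℕ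
  | _, [] => 1
  | [], _ :: _ => 0
  | a :: u, b :: v =>
      qBaux u (b :: v) * X ^ (v.length + 1) + if a = b then qBaux u v else 0

/-- q-binomial coefficient of words `u`, `v` given in natural reading order. -/
noncomputable def qB {α : Type*} [DecidableEq α] (u v : List α) : Polynomial ℕ :=
  qBaux u.reverse v.reverse

/-- The matrix M_{d,j}: identity plus q^j at positions (i,i+1) (0-based) where z_{i+1} = d. -/
noncomputable def entryM {α : Type*} [DecidableEq α] (n : ℕ) (z : List α) (d : α) (j : ℕ) :
    Matrix (Fin (n+1)) (Fin (n+1)) (Polynomial ℕ) :=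
  Matrix.of fun i i' =>
    if i = i' then 1
    else if (i' : ℕ) = (i : ℕ) + 1 ∧ z[(i : ℕ)]? = some d then X ^ j else 0

/-- The q-Parikh matrix of the word w = w_m ⋯ w_0 (natural reading order) induced by z:
P_z(w) = M_{w_m,m} ⋯ M_{w_0,0}. -/
noncomputable def Pm {α : Type*} [DecidableEq α] (n : ℕ) (z : List α) :
    List α → Matrix (Fin (n+1)) (Fin (n+1)) (Polynomial ℕ)
  | [] => 1
  | a :: t => entryM n z a t.length * Pm n z t

/-- s(m) = m(m+1)/2, the sum of the first m positive integers. -/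
def sfun (m : ℕ) : ℕ := m * (m + 1) / 2

section Aux

variable {α : Type*} [DecidableEq α]

lemma qBaux_nil_right (u : List α) : qBaux u [] = 1 := by cases u <;> rfl

lemma qBaux_zero (u v : List α) (h : u.length < v.length) : qBaux u v = 0 := by
  induction u generalizing v with
  | nil => cases v with
    | nil => simp at h
    | cons b v => rfl
  | cons a u ih =>
    cases v with
    | nil => simp at h
    | cons b v =>
      simp only [qBaux]
      rw [ih (b :: v) (by simp at h ⊢; omega), ih v (by simp at h ⊢; omega)]
      simp

lemma qBaux_snoc (a b : α) (u v : List α) :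
    qBaux (u ++ [a]) (v ++ [b]) =
      qBaux u (v ++ [b]) + if a = b then X ^ (u.length - v.length) * qBaux u v else 0 := by
  induction u generalizing v with
  | nil =>
    cases v with
    | nil => simp [qBaux, qBaux_nil_right]
    | cons c v =>
      simp only [List.nil_append, List.cons_append, qBaux, List.append_eq]
      simp [qBaux_zero ([] : List α) (v ++ [b]) (by simp)]
  | cons c u ih =>
    cases v with
    | nil =>
      simp only [List.cons_append, List.nil_append, qBaux, qBaux_nil_right, List.append_eq]
      rw [show ([b] : List α) = [] ++ [b] by rfl, ih []]
      simp only [qBaux_nil_right, List.nil_append, List.length_cons, List.length_nil,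
        Nat.sub_zero]
      by_cases hab : a = b <;> simp [hab, pow_succ] <;> ring
    | cons d v =>
      simp only [List.cons_append, qBaux, List.length_append, List.length_cons,
        List.length_nil, List.append_eq]
      have h1 := ih (d :: v)
      simp only [List.cons_append, List.length_cons] at h1
      rw [h1, ih v]
      by_cases hab : a = b
      · simp only [hab, if_true, ite_true]
        rcases Nat.lt_trichotomy v.length u.length with hl | hl | hl
        · have e1 : u.length - v.length = (u.length - (v.length + 1)) + 1 := by omega
          have e2 : u.length + 1 - (v.length + 1) = u.length - v.length := by omega
          rw [e2, e1]
          by_cases hcd : c = d <;>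
            simp only [hcd, if_true, if_false, ite_true, ite_false] <;> ring
        · rw [qBaux_zero u (d :: v) (by simp; omega)]
          have e2 : u.length + 1 - (v.length + 1) = u.length - v.length := by omega
          rw [e2]
          by_cases hcd : c = d <;>
            simp only [hcd, if_true, if_false, ite_true, ite_false] <;> ring
        · rw [qBaux_zero u (d :: v) (by simp; omega), qBaux_zero u v (by omega)]
          by_cases hcd : c = d <;>
            simp only [hcd, if_true, if_false, ite_true, ite_false] <;> ring
      · simp only [hab, if_false, ite_false]
        by_cases hcd : c = d <;>
          simp only [hcd, if_true, if_false, ite_true, ite_false] <;> ring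

lemma qB_nil_right (u : List α) : qB u [] = 1 := by simp [qB, qBaux_nil_right]

lemma qB_zero (u v : List α) (h : u.length < v.length) : qB u v = 0 := by
  simp only [qB]; exact qBaux_zero _ _ (by simpa using h)

lemma qB_cons_cons (a b : α) (u v : List α) :
    qB (a :: u) (b :: v) =
      qB u (b :: v) + if a = b then X ^ (u.length - v.length) * qB u v else 0 := by
  simp only [qB, List.reverse_cons]
  rw [qBaux_snoc]
  simp

lemma Pm_cons (n : ℕ) (z : List α) (a : α) (t : List α) (i j : Fin (n+1)) :
    Pm n z (a :: t) i j =
      Pm n z t i j +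
        if h : (i : ℕ) + 1 ≤ n ∧ z[(i : ℕ)]? = some a then
          X ^ t.length * Pm n z t ⟨(i : ℕ) + 1, by omega⟩ j
        else 0 := by
  show (entryM n z a t.length * Pm n z t) i j = _
  rw [Matrix.mul_apply]
  have key : ∀ k : Fin (n+1), entryM n z a t.length i k * Pm n z t k j =
      (if i = k then Pm n z t k j else 0) +
      (if (k : ℕ) = (i : ℕ) + 1 ∧ z[(i : ℕ)]? = some a
        then X ^ t.length * Pm n z t k j else 0) := by
    intro k
    by_cases h1 : i = k
    · subst h1
      simp [entryM]
    · simp only [entryM, Matrix.of_apply, h1, if_false]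
      rw [ite_mul, zero_mul, zero_add]
  rw [Finset.sum_congr rfl fun k _ => key k, Finset.sum_add_distrib]
  congr 1
  · simp
  · by_cases hq : z[(i : ℕ)]? = some a
    · by_cases hn : (i : ℕ) + 1 ≤ n
      · rw [dif_pos ⟨hn, hq⟩]
        rw [Finset.sum_eq_single (⟨(i : ℕ) + 1, by omega⟩ : Fin (n+1))]
        · rw [if_pos ⟨rfl, hq⟩]
        · intro k _ hk
          rw [if_neg]
          rintro ⟨h2, -⟩
          exact hk (Fin.ext h2)
        · intro h; exact absurd (Finset.mem_univ _) h
      · rw [dif_neg (by tauto)]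
        apply Finset.sum_eq_zero
        intro k _
        rw [if_neg]
        rintro ⟨h2, -⟩
        omega
    · rw [dif_neg (by tauto)]
      apply Finset.sum_eq_zero
      intro k _
      rw [if_neg]
      rintro ⟨-, h2⟩
      exact hq h2

lemma sfun_succ (m : ℕ) : sfun (m + 1) = sfun m + m + 1 := by
  unfold sfun
  have h : (m + 1) * (m + 1 + 1) = m * (m + 1) + (m + 1) * 2 := by ring
  have h2 : m * (m + 1) % 2 = 0 := by
    rcases Nat.even_mul_succ_self m with ⟨c, hc⟩
    omega
  omega

theorem stmt3_aux (z : List α) (w : List α) :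
    (∀ i j : Fin (z.length + 1), j < i → Pm z.length z w i j = 0) ∧
    (∀ i : Fin (z.length + 1), Pm z.length z w i i = 1) ∧
    (∀ i j : Fin (z.length + 1), i < j →
      Pm z.length z w i j =
        X ^ sfun ((j : ℕ) - (i : ℕ) - 1) *
          qB w ((z.drop (i : ℕ)).take ((j : ℕ) - (i : ℕ)))) := by
  induction w with
  | nil =>
    refine ⟨fun i j hji => Matrix.one_apply_ne (ne_of_gt hji),
      fun i => Matrix.one_apply_eq i, ?_⟩
    intro i j hij
    have h1 : (i : ℕ) < (j : ℕ) := hij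
    have h2 : (j : ℕ) < z.length + 1 := j.isLt
    show (1 : Matrix (Fin (z.length + 1)) (Fin (z.length + 1)) (Polynomial ℕ)) i j = _
    rw [Matrix.one_apply_ne (ne_of_lt hij),
      qB_zero _ _ (by simp only [List.length_nil, List.length_take, List.length_drop]; omega),
      mul_zero]
  | cons a t ih =>
    obtain ⟨ih1, ih2, ih3⟩ := ih
    refine ⟨?_, ?_, ?_⟩
    · intro i j hji
      rw [Pm_cons, ih1 i j hji, zero_add]
      split
      · rw [ih1 ⟨(i : ℕ) + 1, by omega⟩ j (Nat.lt_succ_of_lt hji), mul_zero]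
      · rfl
    · intro i
      rw [Pm_cons, ih2 i]
      split
      · rw [ih1 ⟨(i : ℕ) + 1, by omega⟩ i (Nat.lt_succ_self _), mul_zero, add_zero]
      · rw [add_zero]
    · intro i j hij
      have hij' : (i : ℕ) < (j : ℕ) := hij
      have hjle : (j : ℕ) ≤ z.length := Nat.lt_succ_iff.mp j.isLt
      have hi : (i : ℕ) < z.length := lt_of_lt_of_le hij' hjle
      have hget : z[(i : ℕ)]? = some (z[(i : ℕ)]'hi) := by
        rw [List.getElem?_eq_getElem hi]
      have htake : (z.drop (i : ℕ)).take ((j : ℕ) - (i : ℕ)) =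
          z[(i : ℕ)]'hi :: (z.drop ((i : ℕ) + 1)).take ((j : ℕ) - (i : ℕ) - 1) := by
        rw [List.drop_eq_getElem_cons hi,
          show (j : ℕ) - (i : ℕ) = ((j : ℕ) - (i : ℕ) - 1) + 1 by omega, List.take_succ_cons]
        simp
      have hv' : ((z.drop ((i : ℕ) + 1)).take ((j : ℕ) - (i : ℕ) - 1)).length =
          (j : ℕ) - (i : ℕ) - 1 := by
        simp only [List.length_take, List.length_drop]; omega
      rw [Pm_cons, ih3 i j hij, htake, qB_cons_cons, hv']
      by_cases hab : a = z[(i : ℕ)]'hi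
      · rw [if_pos hab, dif_pos ⟨by omega, by rw [hget, hab]⟩]
        rcases eq_or_lt_of_le (Nat.succ_le_of_lt hij') with hj1 | hj1
        · -- i + 1 = j
          have hfin : (⟨(i : ℕ) + 1, by omega⟩ : Fin (z.length + 1)) = j := Fin.ext hj1
          rw [hfin, ih2 j]
          have h0 : (j : ℕ) - (i : ℕ) - 1 = 0 := by omega
          rw [h0]
          simp [qB_nil_right, sfun]
        · -- i + 1 < j
          have hlt : (⟨(i : ℕ) + 1, by omega⟩ : Fin (z.length + 1)) < j := hj1
          rw [ih3 ⟨(i : ℕ) + 1, by omega⟩ j hlt]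
          obtain ⟨r, hrj⟩ : ∃ r, (j : ℕ) = (i : ℕ) + r + 2 := ⟨(j : ℕ) - (i : ℕ) - 2, by omega⟩
          rw [hrj]
          simp only [Fin.val_mk,
            show (i : ℕ) + r + 2 - (i : ℕ) - 1 = r + 1 from by omega,
            show (i : ℕ) + r + 2 - ((i : ℕ) + 1) = r + 1 from by omega,
            show (i : ℕ) + r + 2 - ((i : ℕ) + 1) - 1 = r from by omega,
            show r + 1 - 1 = r from rfl]
          rcases Nat.lt_or_ge t.length (r + 1) with hl | hl
          · rw [qB_zero t ((z.drop ((i : ℕ) + 1)).take (r + 1))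
              (by rw [show ((z.drop ((i : ℕ) + 1)).take (r + 1)).length = r + 1 from by
                simp only [List.length_take, List.length_drop]; omega]; exact hl)]
            ring
          · obtain ⟨s, hts⟩ : ∃ s, t.length = (r + 1) + s := ⟨t.length - (r + 1), by omega⟩
            rw [hts, Nat.add_sub_cancel_left, sfun_succ r]
            ring
      · rw [if_neg hab, dif_neg (by
          rintro ⟨-, h2⟩
          rw [hget] at h2
          exact hab (Option.some.inj h2).symm)]
        ring

end Aux

/-- The q-Parikh matrix is upper unitriangular and its (i, i+r) entry is
q^{s(r-1)} (w choose z_i ⋯ z_{i+r-1})_q. -/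
theorem stmt3 {α : Type*} [DecidableEq α] (z w : List α) (hw : ∀ a ∈ w, a ∈ z) :
    (∀ i j : Fin (z.length + 1), j < i → Pm z.length z w i j = 0) ∧
    (∀ i : Fin (z.length + 1), Pm z.length z w i i = 1) ∧
    (∀ i j : Fin (z.length + 1), i < j →
      Pm z.length z w i j =
        X ^ sfun ((j : ℕ) - (i : ℕ) - 1) *
          qB w ((z.drop (i : ℕ)).take ((j : ℕ) - (i : ℕ)))) := stmt3_aux z w
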